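/- Let k be a positive integer, let 0 < t₁ < t₂ < … < t_k < 1, let σ ∈ {−1,1}, and let u : (0,1) → {−1,1} be given by u = σ(−1)^j on (t_j, t_{j+1}) for j = 0,…,k, where t₀ = 0 and t_{k+1} = 1 (so u jumps exactly at t₁,…,t_k). Assume ∫₀¹ u = 0, and set w(y) = ∫₀^y u(t) dt. If ∫_{t_j}^{t_{j+1}} w(t) dt = 0 for every j = 1,…,k−1 (i.e. the potential v with v' = −w takes the same value at all jump points), then t_j = (2j−1)/(2k) for every j = 1,…,k; hence u = u_k or u = −u_k, so up to sign there is a unique critical point of the one-dimensional nonlocal isoperimetric problem with exactly k jumps. -/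

import Mathlib

open MeasureTheory intervalIntegral

/-- The lamellar configuration `u_k`: equals `(-1)^j` on `(y_j, y_{j+1})` where
`y_j = (2j-1)/(2k)`, `y_0 = 0`, `y_{k+1} = 1`. -/
noncomputable def uk (k : ℕ) (t : ℝ) : ℝ := (-1 : ℝ) ^ ⌊(k : ℝ) * t + 1 / 2⌋

/-- Uniqueness (up to sign) of the `k`-jump critical point: if `u = σ(−1)^j` on
`(t_j, t_{j+1})`, has mean zero, and its primitive `w` integrates to zero between
consecutive jump points, then `t_j = (2j−1)/(2k)` for all `j`, hence `u = σ u_k` a.e. -/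
theorem stmt4 (k : ℕ) (hk : 1 ≤ k) (t : ℕ → ℝ) (σ : ℝ) (hσ : σ = 1 ∨ σ = -1)
    (ht0 : t 0 = 0) (htlast : t (k + 1) = 1)
    (htmono : ∀ i, i ≤ k → t i < t (i + 1))
    (u : ℝ → ℝ)
    (hu : ∀ j, j ≤ k → ∀ s ∈ Set.Ioo (t j) (t (j + 1)), u s = σ * (-1 : ℝ) ^ j)
    (hmean : ∫ s in (0 : ℝ)..1, u s = 0)
    (w : ℝ → ℝ) (hw : ∀ y, w y = ∫ s in (0 : ℝ)..y, u s)
    (hcrit : ∀ j, 1 ≤ j → j + 1 ≤ k → (∫ s in (t j)..(t (j + 1)), w s) = 0) :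
    (∀ j, 1 ≤ j → j ≤ k → t j = (2 * (j : ℝ) - 1) / (2 * (k : ℝ))) ∧
    (∀ᵐ s ∂(volume.restrict (Set.Ioo (0 : ℝ) 1)), u s = σ * uk k s) := by
  classical
  have hσ2 : σ * σ = 1 := by rcases hσ with h | h <;> rw [h] <;> norm_num
  -- strict monotonicity
  have hlt : ∀ i j, i < j → j ≤ k + 1 → t i < t j := by
    intro i j hij hjk
    induction j with
    | zero => omega
    | succ m ih =>
      rcases Nat.lt_succ_iff_lt_or_eq.1 hij with h | h
      · exact (ih h (by omega)).trans (htmono m (by omega))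
      · exact h ▸ htmono m (by omega)
  -- u is a.e. constant on subintervals
  have hconst : ∀ j, j ≤ k → ∀ a b : ℝ, t j ≤ a → a ≤ b → b ≤ t (j + 1) →
      u =ᵐ[volume.restrict (Set.Ioc a b)] fun _ => σ * (-1 : ℝ) ^ j := by
    intro j hj a b ha hab hb
    have h1 : ∀ᵐ s ∂volume, s ∉ ({t (j+1)} : Set ℝ) :=
      measure_eq_zero_iff_ae_notMem.1 (measure_singleton _)
    have h2 : ∀ᵐ s ∂(volume.restrict (Set.Ioc a b)), s ∉ ({t (j+1)} : Set ℝ) :=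
      h1.filter_mono (ae_mono Measure.restrict_le_self)
    have h3 := ae_restrict_mem (μ := volume) (measurableSet_Ioc : MeasurableSet (Set.Ioc a b))
    filter_upwards [h2, h3] with s hs1 hs2
    exact hu j hj s ⟨lt_of_le_of_lt ha hs2.1,
      lt_of_le_of_ne (hs2.2.trans hb) (by simpa using hs1)⟩
  have hII : ∀ j, j ≤ k → ∀ a b : ℝ, t j ≤ a → a ≤ b → b ≤ t (j + 1) →
      IntervalIntegrable u volume a b := by
    intro j hj a b ha hab hb
    rw [intervalIntegrable_iff, Set.uIoc_of_le hab]
    exact (integrableOn_const measure_Ioc_lt_top.ne).congr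
      (hconst j hj a b ha hab hb).symm
  have hint : ∀ j, j ≤ k → ∀ a b : ℝ, t j ≤ a → a ≤ b → b ≤ t (j + 1) →
      (∫ s in a..b, u s) = σ * (-1 : ℝ) ^ j * (b - a) := by
    intro j hj a b ha hab hb
    have := intervalIntegral.integral_congr_ae (μ := volume) (a := a) (b := b)
      ((ae_restrict_iff' measurableSet_Ioc).1 (hconst j hj a b ha hab hb) |>.mono
        (fun s hs hs' => hs (by rwa [Set.uIoc_of_le hab] at hs')))
    rw [this, intervalIntegral.integral_const, smul_eq_mul, mul_comm]
  -- integrability from 0 to t j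
  have hII0 : ∀ j, j ≤ k + 1 → IntervalIntegrable u volume 0 (t j) := by
    intro j hj
    induction j with
    | zero => rw [ht0]
    | succ m ih =>
      exact (ih (by omega)).trans
        (hII m (by omega) (t m) (t (m+1)) le_rfl (htmono m (by omega)).le le_rfl)
  -- w on intervals
  have hwy : ∀ j, j ≤ k → ∀ y, t j ≤ y → y ≤ t (j + 1) →
      w y = w (t j) + σ * (-1 : ℝ) ^ j * (y - t j) := by
    intro j hj y hy1 hy2
    rw [hw, hw, ← hint j hj (t j) y le_rfl hy1 hy2]
    rw [intervalIntegral.integral_add_adjacent_intervals (hII0 j (by omega))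
      (hII j hj (t j) y le_rfl hy1 hy2)]
  have hW : ∀ j, j ≤ k → w (t (j + 1)) = w (t j) + σ * (-1 : ℝ) ^ j * (t (j+1) - t j) :=
    fun j hj => hwy j hj (t (j+1)) (htmono j hj).le le_rfl
  have hw0 : w (t 0) = 0 := by rw [ht0, hw, intervalIntegral.integral_same]
  -- integral of w on a jump interval
  have hWint : ∀ j, j ≤ k → (∫ s in (t j)..(t (j+1)), w s)
      = (w (t j) + w (t (j+1))) * (t (j+1) - t j) / 2 := by
    intro j hj
    have heq : Set.EqOn w (fun y => w (t j) + σ * (-1:ℝ)^j * (y - t j))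
        (Set.uIcc (t j) (t (j+1))) := by
      intro y hy
      rw [Set.uIcc_of_le (htmono j hj).le] at hy
      exact hwy j hj y hy.1 hy.2
    rw [intervalIntegral.integral_congr heq]
    have h1 : (∫ y in (t j)..(t (j+1)), (w (t j) + σ * (-1:ℝ)^j * (y - t j)))
        = w (t j) * (t (j+1) - t j) + σ * (-1:ℝ)^j *
          ((t (j+1))^2/2 - (t j)^2/2 - t j * (t (j+1) - t j)) := by
      rw [intervalIntegral.integral_add (intervalIntegrable_const)
        (Continuous.intervalIntegrable (by fun_prop : Continuous fun y : ℝ => σ * (-1:ℝ)^j * (y - t j)) _ _),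
        intervalIntegral.integral_const, intervalIntegral.integral_const_mul,
        intervalIntegral.integral_sub intervalIntegral.intervalIntegrable_id
          intervalIntegrable_const,
        integral_id, intervalIntegral.integral_const]
      simp [smul_eq_mul]
      ring
    rw [h1, hW j hj]
    ring
  have hL0 : 0 < t 1 := by rw [← ht0]; exact htmono 0 (by omega)
  -- main induction
  have key : ∀ j, 1 ≤ j → j ≤ k →
      w (t j) = -((-1:ℝ)^j) * σ * t 1 ∧ t j = (2*(j:ℝ) - 1) * t 1 := by
    intro j hj1 hjk
    induction j with
    | zero => omega
    | succ m ih =>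
      by_cases hm : m = 0
      · subst hm
        have h1 := hW 0 (by omega)
        rw [hw0, ht0] at h1
        constructor
        · rw [h1]; ring
        · push_cast; ring
      · have hm1 : 1 ≤ m := by omega
        obtain ⟨hWm, htm⟩ := ih hm1 (by omega)
        have hc := hcrit m hm1 (by omega)
        rw [hWint m (by omega)] at hc
        have hd : 0 < t (m+1) - t m := sub_pos.2 (htmono m (by omega))
        have hsum : w (t m) + w (t (m+1)) = 0 := by
          have h4 : (w (t m) + w (t (m+1))) * (t (m+1) - t m) = 0 := by linarith
          exact (mul_eq_zero.1 h4).resolve_right hd.ne'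
        have hp : ((-1:ℝ)^m) * ((-1:ℝ)^m) = 1 := by
          rw [← pow_add, ← two_mul, pow_mul]; norm_num
        have hWm1 : w (t (m+1)) = -((-1:ℝ)^(m+1)) * σ * t 1 := by
          rw [pow_succ]
          linear_combination hsum - hWm
        refine ⟨hWm1, ?_⟩
        have h2 := hW m (by omega)
        rw [hWm, hWm1, pow_succ] at h2
        push_cast
        linear_combination (-(σ * (-1:ℝ)^m)) * h2 + htm +
          (-((-1:ℝ)^m * (-1:ℝ)^m * (t (m+1) - t m - 2 * t 1))) * hσ2 +
          (-(t (m+1) - t m - 2 * t 1)) * hp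
  -- determine t 1
  have hWk1 : w (t (k+1)) = 0 := by rw [htlast, hw]; exact hmean
  obtain ⟨hWk, htk⟩ := key k hk le_rfl
  have hpk : ((-1:ℝ)^k) * ((-1:ℝ)^k) = 1 := by
    rw [← pow_add, ← two_mul, pow_mul]; norm_num
  have h2 := hW k le_rfl
  rw [hWk, hWk1, htlast] at h2
  have h2k : (2*(k:ℝ)) * t 1 = 1 := by
    linear_combination (σ * (-1:ℝ)^k) * h2 + (-1 : ℝ) * htk +
      (-((-1:ℝ)^k * (-1:ℝ)^k * (t 1 - 1 + t k))) * hσ2 +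
      (-(t 1 - 1 + t k)) * hpk
  have hk0 : (0:ℝ) < k := by exact_mod_cast hk
  have hfirst : ∀ j, 1 ≤ j → j ≤ k → t j = (2 * (j : ℝ) - 1) / (2 * (k : ℝ)) := by
    intro j hj1 hjk
    rw [(key j hj1 hjk).2, eq_div_iff (by positivity)]
    linear_combination (2*(j:ℝ) - 1) * h2k
  refine ⟨hfirst, ?_⟩
  -- a.e. statement
  have hN : ∀ᵐ s ∂volume, s ∉ Set.range (fun i : Fin (k+2) => t i) :=
    measure_eq_zero_iff_ae_notMem.1 ((Set.finite_range _).measure_zero _)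
  filter_upwards [hN.filter_mono (ae_mono Measure.restrict_le_self),
    ae_restrict_mem (μ := volume) measurableSet_Ioo] with s hsN hs
  have hsne : ∀ i, i ≤ k + 1 → s ≠ t i := by
    intro i hi heq
    exact hsN ⟨⟨i, by omega⟩, heq.symm⟩
  have hex : ∃ j, j ≤ k ∧ t j < s ∧ s < t (j+1) := by
    refine ⟨Nat.findGreatest (fun i => t i < s) k, Nat.findGreatest_le k,
      Nat.findGreatest_spec (P := fun i => t i < s) (Nat.zero_le k)
        (show t 0 < s by rw [ht0]; exact hs.1), ?_⟩
    set j := Nat.findGreatest (fun i => t i < s) k with hjdef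
    have hjk : j ≤ k := Nat.findGreatest_le k
    rcases eq_or_lt_of_le hjk with h | h
    · rw [h, htlast]; exact hs.2
    · have hng : ¬ t (j+1) < s :=
        Nat.findGreatest_is_greatest (P := fun i => t i < s) (n := k) (by omega) (by omega)
      exact lt_of_le_of_ne (not_lt.1 hng) (hsne (j+1) (by omega))
  obtain ⟨j, hjk, hj1, hj2⟩ := hex
  rw [hu j hjk s ⟨hj1, hj2⟩]
  have hfloor : ⌊(k:ℝ) * s + 1/2⌋ = (j : ℤ) := by
    rw [Int.floor_eq_iff]
    constructor
    · by_cases hj0 : j = 0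
      · subst hj0
        push_cast
        nlinarith [hs.1, hk0]
      · have := hfirst j (by omega) hjk
        rw [this, div_lt_iff₀ (by positivity)] at hj1
        push_cast at hj1 ⊢
        linarith
    · rcases eq_or_lt_of_le hjk with h | h
      · subst h
        rw [htlast] at hj2
        push_cast
        nlinarith [mul_lt_mul_of_pos_left hj2 hk0]
      · have := hfirst (j+1) (by omega) (by omega)
        rw [this, lt_div_iff₀ (by positivity)] at hj2
        push_cast at hj2 ⊢
        linarith
  unfold uk
  rw [hfloor, zpow_natCast]
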